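/- (Kolmogorov criterion, sufficiency) Let V ∈ ℂ^{n×r}, a ∈ ℂ^n, û ∈ ℂ^r, and let E be the set of indices where |a_j − (Vû)_j| = ‖a − Vû‖_∞. If for every u ∈ ℂ^r, min_{j ∈ E} Re( (Vu)_j · conj(a_j − (Vû)_j) ) ≤ 0, then Vû is a best sup-norm approximation: ‖a − Vû‖_∞ ≤ ‖a − Vu‖_∞ for all u ∈ ℂ^r. -/

import Mathlib

/-- Kolmogorov criterion, sufficiency. -/
theorem stmt_10 (n r : ℕ) (V : Matrix (Fin n) (Fin r) ℂ) (a : Fin n → ℂ)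
    (uhat : Fin r → ℂ)
    (hkol : ∀ u : Fin r → ℂ, ∃ j : Fin n,
      ‖a j - V.mulVec uhat j‖ = ‖a - V.mulVec uhat‖ ∧
      (V.mulVec u j * (starRingEnd ℂ) (a j - V.mulVec uhat j)).re ≤ 0) :
    ∀ u : Fin r → ℂ, ‖a - V.mulVec uhat‖ ≤ ‖a - V.mulVec u‖ := by
  intro u
  obtain ⟨j, hj1, hj2⟩ := hkol (u - uhat)
  set e : ℂ := a j - V.mulVec uhat j with he
  have hd : V.mulVec (u - uhat) j = V.mulVec u j - V.mulVec uhat j := by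
    simp [Matrix.mulVec_sub]
  set d : ℂ := V.mulVec u j - V.mulVec uhat j with hdd
  rw [hd] at hj2
  have hfin : a j - V.mulVec u j = e - d := by rw [he, hdd]; ring
  clear_value e d
  have hkey : ‖e‖ ≤ ‖e - d‖ := by
    have h1 : ‖e‖ ^ 2 ≤ ‖e - d‖ ^ 2 := by
      rw [Complex.sq_norm, Complex.sq_norm, Complex.normSq_sub]
      have h2 : (e * (starRingEnd ℂ) d).re = (d * (starRingEnd ℂ) e).re := by
        simp [Complex.mul_re, Complex.conj_re, Complex.conj_im]; ring
      rw [h2]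
      nlinarith [Complex.normSq_nonneg d]
    nlinarith [norm_nonneg e, norm_nonneg (e - d)]
  calc ‖a - V.mulVec uhat‖ = ‖e‖ := hj1.symm
    _ ≤ ‖e - d‖ := hkey
    _ = ‖(a - V.mulVec u) j‖ := by rw [Pi.sub_apply, hfin]
    _ ≤ ‖a - V.mulVec u‖ := norm_le_pi_norm _ j
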